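/- In a finite cube-free median graph G, for any two distinct vertices u and v, the set L_u(v) of neighbors of v lying in I(u,v) contains either one or two vertices: 1 ≤ |L_u(v)| ≤ 2. -/

import Mathlib

open SimpleGraph Finset

/-- The graph interval `I(u,v)`: vertices on shortest `(u,v)`-paths. -/
def interval {V : Type*} (G : SimpleGraph V) (u v : V) : Set V :=
  {w | G.dist u w + G.dist w v = G.dist u v}

/-- A median graph: connected, and every triple of vertices has a unique median. -/
def IsMedianGraph {V : Type*} (G : SimpleGraph V) : Prop :=
  G.Connected ∧ ∀ x y z : V, ∃! m : V,
    m ∈ interval G x y ∧ m ∈ interval G y z ∧ m ∈ interval G x z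

/-- A set of vertices is (graph) convex if it contains all intervals between its members. -/
def GraphConvex {V : Type*} (G : SimpleGraph V) (S : Set V) : Prop :=
  ∀ u ∈ S, ∀ v ∈ S, interval G u v ⊆ S

/-- A halfspace: a convex set with convex complement. -/
def IsHalfspace {V : Type*} (G : SimpleGraph V) (H : Set V) : Prop :=
  GraphConvex G H ∧ GraphConvex G Hᶜ

/-- The hypercube graph `Q_k`: vertices are `{0,1}^k`, adjacent iff they differ in exactly
one coordinate. -/
def cubeGraph (k : ℕ) : SimpleGraph (Fin k → Fin 2) :=
  SimpleGraph.fromRel (fun a b => ∃! i, a i ≠ b i)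

/-- A graph is cube-free if it has no induced subgraph isomorphic to `Q_3`. -/
def CubeFree {V : Type*} (G : SimpleGraph V) : Prop :=
  ¬ Nonempty (cubeGraph 3 ↪g G)

/-- A 4-cycle of the subgraph of `G` induced by `S`: a 4-element vertex subset of `S`
inducing a cycle of length 4. -/
def IsFourCycleIn {V : Type*} (G : SimpleGraph V) (S : Set V) (t : Finset V) : Prop :=
  (↑t : Set V) ⊆ S ∧ t.card = 4 ∧ Nonempty (G.induce (↑t : Set V) ≃g SimpleGraph.cycleGraph 4)

section MedianAux

variable {V : Type*} {G : SimpleGraph V}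


lemma dcomm (G : SimpleGraph V) (a b : V) : G.dist a b = G.dist b a :=
  SimpleGraph.dist_comm

lemma mem_interval_iff {u v w : V} :
    w ∈ interval G u v ↔ G.dist u w + G.dist w v = G.dist u v := Iff.rfl

lemma eq_or_eq_of_interval_adj (hc : G.Connected) {a b m : V} (hab : G.Adj a b)
    (h : m ∈ interval G a b) : m = a ∨ m = b := by
  rw [mem_interval_iff, dist_eq_one_iff_adj.mpr hab] at h
  rcases Nat.eq_zero_or_pos (G.dist a m) with h0 | h0
  · exact Or.inl (hc.dist_eq_zero_iff.mp h0).symm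
  · exact Or.inr (hc.dist_eq_zero_iff.mp (by omega))

lemma median_no_triangle (hG : IsMedianGraph G) {a b c : V}
    (hab : G.Adj a b) (hbc : G.Adj b c) (hac : G.Adj a c) : False := by
  obtain ⟨hc, hm⟩ := hG
  obtain ⟨m, ⟨h1, h2, h3⟩, -⟩ := hm a b c
  rcases eq_or_eq_of_interval_adj hc hab h1 with rfl | rfl
  · rcases eq_or_eq_of_interval_adj hc hbc h2 with h | h
    · exact hab.ne h
    · exact hac.ne h
  · rcases eq_or_eq_of_interval_adj hc hac h3 with h | h
    · exact hab.ne h.symm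
    · exact hbc.ne h

/-- distance 2 via a common neighbour -/
lemma dist_eq_two (hG : IsMedianGraph G) {x a b : V} (hxa : G.Adj x a) (hxb : G.Adj x b)
    (hab : a ≠ b) : G.dist a b = 2 := by
  have hc := hG.1
  have hnadj : ¬ G.Adj a b := fun h => median_no_triangle hG hxa h hxb
  have hle : G.dist a b ≤ 2 := by
    have := hc.dist_triangle (u := a) (v := x) (w := b)
    rw [dist_eq_one_iff_adj.mpr hxa.symm, dist_eq_one_iff_adj.mpr hxb] at this
    omega
  have h0 : G.dist a b ≠ 0 := fun h => hab (hc.dist_eq_zero_iff.mp h)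
  have h1 : G.dist a b ≠ 1 := fun h => hnadj (dist_eq_one_iff_adj.mp h)
  omega

/-- no K_{2,3}: two distinct vertices cannot have three distinct common neighbours -/
lemma no_K23 (hG : IsMedianGraph G) {x y a b c : V} (hxy : x ≠ y)
    (hab : a ≠ b) (hac : a ≠ c) (hbc : b ≠ c)
    (hxa : G.Adj x a) (hxb : G.Adj x b) (hxc : G.Adj x c)
    (hya : G.Adj y a) (hyb : G.Adj y b) (hyc : G.Adj y c) : False := by
  have d1 : G.dist x a = 1 := dist_eq_one_iff_adj.mpr hxa
  have hmem : ∀ z : V, G.Adj z a → G.Adj z b → G.Adj z c →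
      (z ∈ interval G a b ∧ z ∈ interval G b c ∧ z ∈ interval G a c) := by
    intro z hza hzb hzc
    refine ⟨?_, ?_, ?_⟩ <;> rw [mem_interval_iff]
    · rw [dist_eq_two hG hza hzb hab, dist_eq_one_iff_adj.mpr hza.symm,
        dist_eq_one_iff_adj.mpr hzb]
    · rw [dist_eq_two hG hzb hzc hbc, dist_eq_one_iff_adj.mpr hzb.symm,
        dist_eq_one_iff_adj.mpr hzc]
    · rw [dist_eq_two hG hza hzc hac, dist_eq_one_iff_adj.mpr hza.symm,
        dist_eq_one_iff_adj.mpr hzc]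
  obtain ⟨m, -, hu⟩ := hG.2 a b c
  exact hxy ((hu x (hmem x hxa hxb hxc)).trans (hu y (hmem y hya hyb hyc)).symm)

/-- the bottom vertex of the square spanned by two downward neighbours -/
lemma square_vertex (hG : IsMedianGraph G) {u v w1 w2 : V}
    (hv1 : G.Adj v w1) (hv2 : G.Adj v w2) (h12 : w1 ≠ w2)
    (hl1 : G.dist u w1 + 1 = G.dist u v) (hl2 : G.dist u w2 + 1 = G.dist u v) :
    ∃ m, G.Adj w1 m ∧ G.Adj w2 m ∧ G.dist u m + 1 = G.dist u w1 := by
  have hc := hG.1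
  have hd12 : G.dist w1 w2 = 2 := dist_eq_two hG hv1 hv2 h12
  obtain ⟨m, ⟨h1, h2, h3⟩, -⟩ := hG.2 w1 w2 u
  rw [mem_interval_iff, hd12] at h1
  rw [mem_interval_iff] at h2 h3
  have hmw1 : m ≠ w1 := by
    intro h
    rw [h, dcomm G w2 w1, hd12, dcomm G w1 u, dcomm G w2 u] at h2
    omega
  have hmw2 : m ≠ w2 := by
    intro h
    rw [h, hd12, dcomm G w2 u, dcomm G w1 u] at h3
    omega
  have d1 : G.dist w1 m ≠ 0 := fun h => hmw1 (hc.dist_eq_zero_iff.mp h).symm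
  have d2 : G.dist m w2 ≠ 0 := fun h => hmw2 (hc.dist_eq_zero_iff.mp h)
  have e1 : G.dist w1 m = 1 := by omega
  have e2 : G.dist m w2 = 1 := by omega
  refine ⟨m, dist_eq_one_iff_adj.mp e1, dist_eq_one_iff_adj.mp ((dcomm G w2 m).trans e2), ?_⟩
  rw [e1, dcomm G m u, dcomm G w1 u] at h3
  omega



instance cubeDec : DecidableRel (cubeGraph 3).Adj := fun a b =>
  decidable_of_iff (a ≠ b ∧ ((∃ i, a i ≠ b i ∧ ∀ j, a j ≠ b j → j = i) ∨
    (∃ i, b i ≠ a i ∧ ∀ j, b j ≠ a j → j = i))) Iff.rfl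

def cubeMap (v w1 w2 w3 a b c t : V) : (Fin 3 → Fin 2) → V := fun x =>
  if x = ![0,0,0] then v else if x = ![0,0,1] then w3 else if x = ![0,1,0] then w2
  else if x = ![0,1,1] then c else if x = ![1,0,0] then w1 else if x = ![1,0,1] then b
  else if x = ![1,1,0] then a else t

section eval
variable (v w1 w2 w3 a b c t : V)

lemma cubeMap_e0 : cubeMap v w1 w2 w3 a b c t ![0,0,0] = v := by
  simp (config := { decide := true }) [cubeMap]

lemma cubeMap_e1 : cubeMap v w1 w2 w3 a b c t ![0,0,1] = w3 := by
  simp (config := { decide := true }) [cubeMap]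

lemma cubeMap_e2 : cubeMap v w1 w2 w3 a b c t ![0,1,0] = w2 := by
  simp (config := { decide := true }) [cubeMap]

lemma cubeMap_e3 : cubeMap v w1 w2 w3 a b c t ![0,1,1] = c := by
  simp (config := { decide := true }) [cubeMap]

lemma cubeMap_e4 : cubeMap v w1 w2 w3 a b c t ![1,0,0] = w1 := by
  simp (config := { decide := true }) [cubeMap]

lemma cubeMap_e5 : cubeMap v w1 w2 w3 a b c t ![1,0,1] = b := by
  simp (config := { decide := true }) [cubeMap]

lemma cubeMap_e6 : cubeMap v w1 w2 w3 a b c t ![1,1,0] = a := by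
  simp (config := { decide := true }) [cubeMap]

lemma cubeMap_e7 : cubeMap v w1 w2 w3 a b c t ![1,1,1] = t := by
  simp (config := { decide := true }) [cubeMap]

end eval

lemma cube_cases : ∀ x : Fin 3 → Fin 2, x = ![0,0,0] ∨ x = ![0,0,1] ∨ x = ![0,1,0] ∨
    x = ![0,1,1] ∨ x = ![1,0,0] ∨ x = ![1,0,1] ∨ x = ![1,1,0] ∨ x = ![1,1,1] := by decide


lemma cube_of_three (hG : IsMedianGraph G) {u v w1 w2 w3 : V}
    (hv1 : G.Adj v w1) (hv2 : G.Adj v w2) (hv3 : G.Adj v w3)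
    (h12 : w1 ≠ w2) (h13 : w1 ≠ w3) (h23 : w2 ≠ w3)
    (hl1 : G.dist u w1 + 1 = G.dist u v)
    (hl2 : G.dist u w2 + 1 = G.dist u v)
    (hl3 : G.dist u w3 + 1 = G.dist u v) :
    Nonempty (cubeGraph 3 ↪g G) := by
  have hcon := hG.1
  obtain ⟨a, ha1, ha2, hla⟩ := square_vertex hG hv1 hv2 h12 hl1 hl2
  obtain ⟨b, hb1, hb3, hlb⟩ := square_vertex hG hv1 hv3 h13 hl1 hl3
  obtain ⟨c, hc2, hc3, hlc⟩ := square_vertex hG hv2 hv3 h23 hl2 hl3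
  -- levels
  have hva : v ≠ a := by intro h; rw [← h] at hla; omega
  have hvb : v ≠ b := by intro h; rw [← h] at hlb; omega
  have hvc : v ≠ c := by intro h; rw [← h] at hlc; omega
  have hw1c : w1 ≠ c := by intro h; rw [← h] at hlc; omega
  have hw2b : w2 ≠ b := by intro h; rw [← h] at hlb; omega
  have hw3a : w3 ≠ a := by intro h; rw [← h] at hla; omega
  -- nonadjacency among the w's and v/m's
  have hnw12 : ¬ G.Adj w1 w2 := fun h => median_no_triangle hG hv1 h hv2
  have hnw13 : ¬ G.Adj w1 w3 := fun h => median_no_triangle hG hv1 h hv3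
  have hnw23 : ¬ G.Adj w2 w3 := fun h => median_no_triangle hG hv2 h hv3
  have hnva : ¬ G.Adj v a := fun h => median_no_triangle hG hv1 ha1 h
  have hnvb : ¬ G.Adj v b := fun h => median_no_triangle hG hv1 hb1 h
  have hnvc : ¬ G.Adj v c := fun h => median_no_triangle hG hv2 hc2 h
  -- the three square-bottoms are pairwise distinct
  have hab : a ≠ b := by
    intro h
    exact no_K23 hG hva h12 h13 h23 hv1 hv2 hv3 ha1.symm ha2.symm (by rw [h]; exact hb3.symm)
  have hac : a ≠ c := by
    intro h
    exact no_K23 hG hva h12 h13 h23 hv1 hv2 hv3 ha1.symm ha2.symm (by rw [h]; exact hc3.symm)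
  have hbc : b ≠ c := by
    intro h
    exact no_K23 hG hvb h12 h13 h23 hv1 hv2 hv3 hb1.symm (by rw [h]; exact hc2.symm) hb3.symm
  -- wrong-pair nonadjacency
  have hn1c : ¬ G.Adj w1 c := fun h =>
    no_K23 hG hvc h12 h13 h23 hv1 hv2 hv3 h.symm hc2.symm hc3.symm
  have hn2b : ¬ G.Adj w2 b := fun h =>
    no_K23 hG hvb h12 h13 h23 hv1 hv2 hv3 hb1.symm h.symm hb3.symm
  have hn3a : ¬ G.Adj w3 a := fun h =>
    no_K23 hG hva h12 h13 h23 hv1 hv2 hv3 ha1.symm ha2.symm h.symm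
  -- nonadjacency among the square-bottoms
  have hnab : ¬ G.Adj a b := fun h => median_no_triangle hG h hb1.symm ha1.symm
  have hnac : ¬ G.Adj a c := fun h => median_no_triangle hG h hc2.symm ha2.symm
  have hnbc : ¬ G.Adj b c := fun h => median_no_triangle hG h hc3.symm hb3.symm
  have dab : G.dist a b = 2 := dist_eq_two hG ha1 hb1 hab
  have dac : G.dist a c = 2 := dist_eq_two hG ha2 hc2 hac
  have dbc : G.dist b c = 2 := dist_eq_two hG hb3 hc3 hbc
  -- the bottom vertex t of the cube
  obtain ⟨t, ⟨ht1, ht2, ht3⟩, -⟩ := hG.2 a b c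
  rw [mem_interval_iff, dab] at ht1
  rw [mem_interval_iff, dbc] at ht2
  rw [mem_interval_iff, dac] at ht3
  have hta : t ≠ a := by
    intro h; rw [h, dcomm G b a, dab, dac] at ht2; omega
  have htb' : t ≠ b := by
    intro h; rw [h, dab, dbc] at ht3; omega
  have htc' : t ≠ c := by
    intro h; rw [h, dac, dcomm G c b, dbc] at ht1; omega
  have dat : G.dist a t = 1 := by
    have h0 : G.dist a t ≠ 0 := fun h => hta (hcon.dist_eq_zero_iff.mp h).symm
    have h1 : G.dist t b ≠ 0 := fun h => htb' (hcon.dist_eq_zero_iff.mp h)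
    omega
  have dtb : G.dist t b = 1 := by omega
  have dtc : G.dist t c = 1 := by
    rw [dcomm G b t, dtb] at ht2; omega
  have hat : G.Adj a t := dist_eq_one_iff_adj.mp dat
  have htb : G.Adj t b := dist_eq_one_iff_adj.mp dtb
  have htc : G.Adj t c := dist_eq_one_iff_adj.mp dtc
  -- t vs the upper part
  have htv : t ≠ v := fun h => hnva ((h ▸ hat).symm)
  have htw1 : t ≠ w1 := fun h => hn1c (h ▸ htc)
  have htw2 : t ≠ w2 := fun h => hn2b (h ▸ htb)
  have htw3 : t ≠ w3 := fun h => hn3a (h ▸ hat.symm)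
  have hnvt : ¬ G.Adj v t := fun h =>
    no_K23 hG htw1.symm hva hvb hab hv1.symm ha1 hb1 h.symm hat.symm htb
  have hn1t : ¬ G.Adj w1 t := fun h => median_no_triangle hG h hat.symm ha1
  have hn2t : ¬ G.Adj w2 t := fun h => median_no_triangle hG h hat.symm ha2
  have hn3t : ¬ G.Adj w3 t := fun h => median_no_triangle hG h htb hb3
  -- symmetric copies of all adjacency facts
  have hv1s := hv1.symm; have hv2s := hv2.symm; have hv3s := hv3.symm
  have ha1s := ha1.symm; have ha2s := ha2.symm; have hb1s := hb1.symm
  have hb3s := hb3.symm; have hc2s := hc2.symm; have hc3s := hc3.symm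
  have hats := hat.symm; have htbs := htb.symm; have htcs := htc.symm
  have hbt : G.Adj b t := htb.symm
  have hct : G.Adj c t := htc.symm
  have hta' : G.Adj t a := hat.symm
  have hnw12s : ¬ G.Adj w2 w1 := fun h => hnw12 h.symm
  have hnw13s : ¬ G.Adj w3 w1 := fun h => hnw13 h.symm
  have hnw23s : ¬ G.Adj w3 w2 := fun h => hnw23 h.symm
  have hnvas : ¬ G.Adj a v := fun h => hnva h.symm
  have hnvbs : ¬ G.Adj b v := fun h => hnvb h.symm
  have hnvcs : ¬ G.Adj c v := fun h => hnvc h.symm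
  have hn1cs : ¬ G.Adj c w1 := fun h => hn1c h.symm
  have hn2bs : ¬ G.Adj b w2 := fun h => hn2b h.symm
  have hn3as : ¬ G.Adj a w3 := fun h => hn3a h.symm
  have hnabs : ¬ G.Adj b a := fun h => hnab h.symm
  have hnacs : ¬ G.Adj c a := fun h => hnac h.symm
  have hnbcs : ¬ G.Adj c b := fun h => hnbc h.symm
  have hnvts : ¬ G.Adj t v := fun h => hnvt h.symm
  have hn1ts : ¬ G.Adj t w1 := fun h => hn1t h.symm
  have hn2ts : ¬ G.Adj t w2 := fun h => hn2t h.symm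
  have hn3ts : ¬ G.Adj t w3 := fun h => hn3t h.symm
  -- ne facts
  have ne_vw1 : v ≠ w1 := hv1.ne
  have ne_vw2 : v ≠ w2 := hv2.ne
  have ne_vw3 : v ≠ w3 := hv3.ne
  have ne_w1a : w1 ≠ a := ha1.ne
  have ne_w2a : w2 ≠ a := ha2.ne
  have ne_w1b : w1 ≠ b := hb1.ne
  have ne_w3b : w3 ≠ b := hb3.ne
  have ne_w2c : w2 ≠ c := hc2.ne
  have ne_w3c : w3 ≠ c := hc3.ne
  have ne_at : a ≠ t := hat.ne
  have ne_tb : t ≠ b := htb.ne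
  have ne_tc : t ≠ c := htc.ne
  have hinj : Function.Injective (cubeMap v w1 w2 w3 a b c t) := by
    intro x y hxy
    rcases cube_cases x with rfl|rfl|rfl|rfl|rfl|rfl|rfl|rfl <;>
      rcases cube_cases y with rfl|rfl|rfl|rfl|rfl|rfl|rfl|rfl <;>
      simp only [cubeMap_e0, cubeMap_e1, cubeMap_e2, cubeMap_e3, cubeMap_e4,
        cubeMap_e5, cubeMap_e6, cubeMap_e7] at hxy <;>
      first
        | rfl
        | exact absurd hxy (by assumption)
        | exact absurd hxy.symm (by assumption)
  refine ⟨⟨⟨cubeMap v w1 w2 w3 a b c t, hinj⟩, ?_⟩⟩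
  · intro x y
    rcases cube_cases x with rfl|rfl|rfl|rfl|rfl|rfl|rfl|rfl <;>
      rcases cube_cases y with rfl|rfl|rfl|rfl|rfl|rfl|rfl|rfl <;>
      simp only [Function.Embedding.coeFn_mk, cubeMap_e0, cubeMap_e1, cubeMap_e2,
        cubeMap_e3, cubeMap_e4, cubeMap_e5, cubeMap_e6, cubeMap_e7] <;>
      first
        | exact iff_of_false G.irrefl (by decide)
        | exact iff_of_true (by assumption) (by decide)
        | exact iff_of_false (by assumption) (by decide)


end MedianAux

/-- In a finite cube-free median graph, for distinct vertices `u ≠ v`, the set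
`L_u(v)` of neighbors of `v` in `I(u,v)` has one or two elements. -/
theorem Lu_card_le_two {V : Type*} [Fintype V] (G : SimpleGraph V)
    (hG : IsMedianGraph G) (hcf : CubeFree G) (u v : V) (huv : u ≠ v) :
    1 ≤ {w : V | G.Adj v w ∧ w ∈ interval G u v}.ncard ∧
      {w : V | G.Adj v w ∧ w ∈ interval G u v}.ncard ≤ 2 := by
  classical
  have hcon := hG.1
  have hSne : {w : V | G.Adj v w ∧ w ∈ interval G u v}.Nonempty := by
    obtain ⟨p, hp⟩ := hcon.exists_walk_length_eq_dist v u
    cases p with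
    | nil => exact absurd rfl huv.symm
    | @cons _ x _ h q =>
      rw [SimpleGraph.Walk.length_cons] at hp
      have hd1 : G.dist x u ≤ q.length := SimpleGraph.dist_le q
      have htri : G.dist v u ≤ G.dist v x + G.dist x u := hcon.dist_triangle
      rw [dist_eq_one_iff_adj.mpr h] at htri
      refine ⟨x, h, ?_⟩
      rw [mem_interval_iff, dist_eq_one_iff_adj.mpr h.symm, dcomm G u x, dcomm G u v]
      omega
  refine ⟨(Set.ncard_pos).mpr hSne, ?_⟩
  by_contra hgt
  push_neg at hgt
  rw [Set.ncard_eq_toFinset_card'] at hgt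
  obtain ⟨x, y, z, hx, hy, hz, hxy, hxz, hyz⟩ := Finset.two_lt_card_iff.mp hgt
  rw [Set.mem_toFinset] at hx hy hz
  obtain ⟨hax, hix⟩ := hx
  obtain ⟨hay, hiy⟩ := hy
  obtain ⟨haz, hiz⟩ := hz
  rw [mem_interval_iff, dist_eq_one_iff_adj.mpr hax.symm] at hix
  rw [mem_interval_iff, dist_eq_one_iff_adj.mpr hay.symm] at hiy
  rw [mem_interval_iff, dist_eq_one_iff_adj.mpr haz.symm] at hiz
  exact hcf (cube_of_three hG hax hay haz hxy hxz hyz hix hiy hiz)
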